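/- For every natural number n, nonzero real \beta, real r, and natural number s: the n-th higher-order Euler polynomial value E_n^{(s)}(r/\beta) satisfies E_n^{(s)}(r/\beta) = \sum_{k=0}^{n} W_{\beta,r}(n,k) * (-1)^k * \langle s \rangle_k / (\beta^{n-k} 2^k), where \langle s \rangle_k is the rising factorial. -/

import Mathlib

/-- The Euler polynomials, via the recurrence obtained from the generating
function `2 e^{xt}/(e^t + 1) = ∑ E_n(x) t^n/n!`, i.e.
`∑_{k=0}^{n} C(n,k) E_k(x) + E_n(x) = 2 x^n`. -/
noncomputable def eulerPoly (n : ℕ) (x : ℝ) : ℝ :=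
  x ^ n - 2⁻¹ * ∑ k ∈ (Finset.range n).attach, (n.choose k.1 : ℝ) * eulerPoly k.1 x
termination_by n
decreasing_by exact Finset.mem_range.mp k.2

/-- The higher order Euler polynomials `E_n^{(s)}(x)`, with generating function
`(2/(e^t+1))^s e^{xt}`, defined as the `s`-fold binomial convolution of the Euler
numbers `E_k(0)` with `x^n`. -/
noncomputable def eulerPolyH : ℕ → ℕ → ℝ → ℝ
  | 0, n, x => x ^ n
  | s + 1, n, x =>
      ∑ k ∈ Finset.range (n + 1), (n.choose k : ℝ) * eulerPoly k 0 * eulerPolyH s (n - k) x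

open Finset

noncomputable def Dg (F : ℝ → ℝ) (k : ℕ) (x : ℝ) : ℝ :=
  ∑ j ∈ range (k + 1), (-1) ^ j * (k.choose j : ℝ) * F (x + j)

noncomputable def DD (k n : ℕ) (x : ℝ) : ℝ := Dg (fun y => y ^ n) k x

lemma DD_def (k n : ℕ) (x : ℝ) :
    DD k n x = ∑ j ∈ range (k + 1), (-1) ^ j * (k.choose j : ℝ) * (x + j) ^ n := rfl

lemma altsum (k : ℕ) :
    ∑ j ∈ range (k + 1), (-1 : ℝ) ^ j * (k.choose j : ℝ) = if k = 0 then 1 else 0 := by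
  have h := Int.alternating_sum_range_choose (n := k)
  have h2 := congrArg (fun z : ℤ => (z : ℝ)) h
  push_cast at h2
  simpa using h2

lemma Dg_succ (F : ℝ → ℝ) (k : ℕ) (x : ℝ) :
    Dg F (k + 1) x = Dg F k x - Dg F k (x + 1) := by
  have harg : ∀ j : ℕ, x + ((j : ℝ) + 1) = x + j + 1 := fun j => by ring
  have h0 : ∑ j ∈ range (k + 2), (-1) ^ j * (k.choose j : ℝ) * F (x + j) = Dg F k x := by
    rw [sum_range_succ, Nat.choose_succ_self]
    simp [Dg]
  have hx : Dg F k x = (∑ j ∈ range (k + 1),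
      (-1) ^ (j + 1) * (k.choose (j + 1) : ℝ) * F (x + j + 1)) + F x := by
    rw [← h0, sum_range_succ']
    simp only [Nat.cast_add, Nat.cast_one, Nat.cast_zero, add_zero, pow_zero,
      Nat.choose_zero_right, one_mul, harg]
  have hx1 : Dg F k (x + 1) = ∑ j ∈ range (k + 1), (-1) ^ j * (k.choose j : ℝ) * F (x + j + 1) := by
    rw [Dg]
    apply sum_congr rfl; intro j _
    have : x + 1 + (j : ℝ) = x + j + 1 := by ring
    rw [this]
  have hsucc : Dg F (k + 1) x = (∑ j ∈ range (k + 1),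
      (-1) ^ (j + 1) * ((k.choose j : ℝ) + (k.choose (j + 1) : ℝ)) * F (x + j + 1)) + F x := by
    rw [Dg, sum_range_succ']
    simp only [Nat.choose_succ_succ, Nat.cast_add, Nat.cast_one, Nat.cast_zero, add_zero,
      pow_zero, Nat.choose_zero_right, one_mul, harg]
  rw [hsucc, hx, hx1]
  have hsplit : ∀ j ∈ range (k + 1), (-1 : ℝ) ^ (j + 1) * ((k.choose j : ℝ) + (k.choose (j + 1) : ℝ)) * F (x + j + 1)
      = (-1) ^ (j + 1) * (k.choose (j + 1) : ℝ) * F (x + j + 1)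
        - (-1) ^ j * (k.choose j : ℝ) * F (x + j + 1) := by
    intro j _; ring
  rw [sum_congr rfl hsplit, sum_sub_distrib]
  ring

lemma DD_succ (k n : ℕ) (x : ℝ) : DD (k + 1) n x = DD k n x - DD k n (x + 1) :=
  Dg_succ _ _ _

lemma DD_succ_pow (k n : ℕ) (x : ℝ) :
    DD (k + 1) (n + 1) x = x * DD (k + 1) n x - (k + 1) * DD k n (x + 1) := by
  rw [DD_def, DD_def, DD_def]
  have hsplit : ∀ j ∈ range (k + 2), (-1 : ℝ) ^ j * ((k + 1).choose j : ℝ) * (x + j) ^ (n + 1)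
      = x * ((-1) ^ j * ((k + 1).choose j : ℝ) * (x + j) ^ n)
        + (-1) ^ j * ((j : ℝ) * ((k + 1).choose j : ℝ)) * (x + j) ^ n := by
    intro j _; ring
  rw [sum_congr rfl hsplit, sum_add_distrib, ← mul_sum]
  have hS : ∑ j ∈ range (k + 2), (-1 : ℝ) ^ j * ((j : ℝ) * ((k + 1).choose j : ℝ)) * (x + j) ^ n
      = -((k + 1) * ∑ j ∈ range (k + 1), (-1 : ℝ) ^ j * (k.choose j : ℝ) * (x + 1 + j) ^ n) := by
    rw [sum_range_succ']
    have hterm : ∀ j ∈ range (k + 1),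
        (-1 : ℝ) ^ (j + 1) * ((((j : ℕ) + 1 : ℕ) : ℝ) * ((k + 1).choose (j + 1) : ℝ)) * (x + (((j : ℕ) + 1 : ℕ) : ℝ)) ^ n
        = -(((k : ℝ) + 1) * ((-1) ^ j * (k.choose j : ℝ) * (x + 1 + j) ^ n)) := by
      intro j _
      have hc : (k + 1) * k.choose j = (k + 1).choose (j + 1) * (j + 1) := Nat.add_one_mul_choose_eq k j
      have hc' : (((k : ℝ) + 1) * (k.choose j : ℝ)) = ((k + 1).choose (j + 1) : ℝ) * ((j : ℝ) + 1) := by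
        exact_mod_cast congrArg (fun z : ℕ => (z : ℝ)) hc
      have harg : x + (((j : ℕ) + 1 : ℕ) : ℝ) = x + 1 + j := by push_cast; ring
      rw [harg]
      push_cast
      linear_combination ((-1 : ℝ) ^ j * (x + 1 + j) ^ n) * hc'
    rw [sum_congr rfl hterm]
    push_cast
    simp [← sum_neg_distrib, mul_sum]
  rw [hS]
  ring

lemma DD_eq_zero : ∀ (n k : ℕ) (x : ℝ), n < k → DD k n x = 0 := by
  intro n
  induction n with
  | zero =>
    intro k x h
    have hk : k ≠ 0 := by omega
    rw [DD_def]
    simp only [pow_zero, mul_one]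
    rw [altsum, if_neg hk]
  | succ n ih =>
    intro k x h
    match k, h with
    | k + 1, h =>
      rw [DD_succ_pow, ih (k + 1) x (by omega), ih k (x + 1) (by omega)]
      ring

lemma sum_choose_DD (m n : ℕ) (x : ℝ) :
    ∑ c ∈ range (n + 1), (n.choose c : ℝ) * DD m c x = DD m n (x + 1) := by
  simp only [DD_def, mul_sum]
  rw [sum_comm]
  apply sum_congr rfl; intro j _
  have h1 : ∀ c ∈ range (n + 1), (n.choose c : ℝ) * ((-1) ^ j * (m.choose j : ℝ) * (x + j) ^ c)
      = ((-1 : ℝ) ^ j * (m.choose j : ℝ)) * ((x + (j : ℝ)) ^ c * 1 ^ (n - c) * (n.choose c : ℝ)) := by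
    intro c _; ring
  rw [sum_congr rfl h1, ← mul_sum, ← add_pow]
  have : x + (j : ℝ) + 1 = x + 1 + j := by ring
  rw [this]

lemma Dg_DD (m l n : ℕ) : ∀ x : ℝ,
    ∑ i ∈ range (m + 1), (-1) ^ i * (m.choose i : ℝ) * DD l n (x + i) = DD (m + l) n x := by
  induction m with
  | zero => intro x; simp
  | succ m ih =>
    intro x
    rw [show (∑ i ∈ range (m + 1 + 1), (-1 : ℝ) ^ i * ((m + 1).choose i : ℝ) * DD l n (x + i))
        = Dg (fun y => DD l n y) (m + 1) x from rfl, Dg_succ]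
    rw [show Dg (fun y => DD l n y) m x
        = ∑ i ∈ range (m + 1), (-1 : ℝ) ^ i * (m.choose i : ℝ) * DD l n (x + i) from rfl]
    rw [show Dg (fun y => DD l n y) m (x + 1)
        = ∑ i ∈ range (m + 1), (-1 : ℝ) ^ i * (m.choose i : ℝ) * DD l n (x + 1 + i) from rfl]
    rw [ih x, ih (x + 1)]
    rw [show m + 1 + l = m + l + 1 from by omega, DD_succ]

lemma key_conv (m l n : ℕ) (x : ℝ) :
    ∑ c ∈ range (n + 1), (n.choose c : ℝ) * DD m c 0 * DD l (n - c) x = DD (m + l) n x := by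
  rw [← Dg_DD m l n x]
  have h1 : ∀ c ∈ range (n + 1), (n.choose c : ℝ) * DD m c 0 * DD l (n - c) x
      = ∑ i ∈ range (m + 1), ∑ j ∈ range (l + 1),
          (-1 : ℝ) ^ i * (m.choose i : ℝ) * ((-1 : ℝ) ^ j * (l.choose j : ℝ)
            * ((i : ℝ) ^ c * (x + (j : ℝ)) ^ (n - c) * (n.choose c : ℝ))) := by
    intro c _
    rw [DD_def, DD_def, mul_assoc, sum_mul_sum]
    rw [mul_sum]
    apply sum_congr rfl; intro i _
    rw [mul_sum]
    apply sum_congr rfl; intro j _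
    ring
  rw [sum_congr rfl h1, sum_comm]
  apply sum_congr rfl; intro i _
  rw [sum_comm]
  have h2 : ∀ j ∈ range (l + 1), ∑ c ∈ range (n + 1),
      (-1 : ℝ) ^ i * (m.choose i : ℝ) * ((-1 : ℝ) ^ j * (l.choose j : ℝ)
        * ((i : ℝ) ^ c * (x + (j : ℝ)) ^ (n - c) * (n.choose c : ℝ)))
      = (-1 : ℝ) ^ i * (m.choose i : ℝ) * ((-1 : ℝ) ^ j * (l.choose j : ℝ) * (x + (i : ℝ) + (j : ℝ)) ^ n) := by
    intro j _
    rw [← mul_sum, ← mul_sum, ← add_pow]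
    have : (i : ℝ) + (x + (j : ℝ)) = x + (i : ℝ) + (j : ℝ) := by ring
    rw [this]
  rw [sum_congr rfl h2, ← mul_sum, DD_def]
lemma eulerPoly_eq (n : ℕ) : ∀ x : ℝ,
    eulerPoly n x = ∑ m ∈ range (n + 1), (2⁻¹ : ℝ) ^ m * DD m n x := by
  induction n using Nat.strong_induction_on with
  | _ n ih =>
    intro x
    rw [eulerPoly]
    rw [Finset.sum_attach (range n) (fun k => (n.choose k : ℝ) * eulerPoly k x)]
    have hrw : ∀ k ∈ range n, (n.choose k : ℝ) * eulerPoly k x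
        = (n.choose k : ℝ) * ∑ m ∈ range (n + 1), (2⁻¹ : ℝ) ^ m * DD m k x := by
      intro k hk
      rw [ih k (mem_range.mp hk)]
      congr 1
      apply Finset.sum_subset (by rw [range_subset_range]; have := mem_range.mp hk; omega)
      intro m _ hm
      rw [DD_eq_zero k m x (by simp only [mem_range] at *; omega)]
      ring
    rw [sum_congr rfl hrw]
    simp only [mul_sum]
    rw [sum_comm]
    have hin : ∀ m ∈ range (n + 1),
        ∑ k ∈ range n, 2⁻¹ * ((n.choose k : ℝ) * ((2⁻¹ : ℝ) ^ m * DD m k x))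
          = 2⁻¹ * ((2⁻¹ : ℝ) ^ m * -DD (m + 1) n x) := by
      intro m _
      have h2 := sum_choose_DD m n x
      rw [sum_range_succ, Nat.choose_self, Nat.cast_one, one_mul] at h2
      have h3 : ∑ k ∈ range n, (n.choose k : ℝ) * DD m k x = DD m n (x + 1) - DD m n x := by
        linarith
      calc ∑ k ∈ range n, 2⁻¹ * ((n.choose k : ℝ) * ((2⁻¹ : ℝ) ^ m * DD m k x))
          = 2⁻¹ * ((2⁻¹ : ℝ) ^ m * ∑ k ∈ range n, (n.choose k : ℝ) * DD m k x) := by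
            rw [mul_sum, mul_sum]; apply sum_congr rfl; intros; ring
        _ = 2⁻¹ * ((2⁻¹ : ℝ) ^ m * -DD (m + 1) n x) := by rw [h3, DD_succ]; ring
    rw [sum_congr rfl hin]
    have hT : ∑ m ∈ range (n + 1), (2⁻¹ : ℝ) ^ m * DD (m + 1) n x
        = 2 * ((∑ m ∈ range (n + 1), (2⁻¹ : ℝ) ^ m * DD m n x) - x ^ n) := by
      have h4 : ∑ m ∈ range (n + 2), (2⁻¹ : ℝ) ^ m * DD m n x
          = (∑ m ∈ range (n + 1), (2⁻¹ : ℝ) ^ (m + 1) * DD (m + 1) n x) + DD 0 n x := by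
        rw [sum_range_succ']
        simp
      rw [sum_range_succ, DD_eq_zero n (n + 1) x (by omega)] at h4
      have h5 : DD 0 n x = x ^ n := by simp [DD_def]
      rw [h5] at h4
      have h6 : ∑ m ∈ range (n + 1), (2⁻¹ : ℝ) ^ (m + 1) * DD (m + 1) n x
          = 2⁻¹ * ∑ m ∈ range (n + 1), (2⁻¹ : ℝ) ^ m * DD (m + 1) n x := by
        rw [mul_sum]; apply sum_congr rfl; intros; ring
      rw [h6] at h4
      simp only [mul_zero, add_zero] at h4
      linarith
    have hneg : ∑ m ∈ range (n + 1), 2⁻¹ * ((2⁻¹ : ℝ) ^ m * -DD (m + 1) n x)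
        = -(2⁻¹ * ∑ m ∈ range (n + 1), (2⁻¹ : ℝ) ^ m * DD (m + 1) n x) := by
      rw [mul_sum, ← sum_neg_distrib]; apply sum_congr rfl; intros; ring
    rw [hneg, hT]
    ring

lemma triangle (N : ℕ) (f : ℕ → ℕ → ℝ) (hf : ∀ m l, N < m + l → f m l = 0) :
    ∑ m ∈ range (N + 1), ∑ l ∈ range (N + 1), f m l
      = ∑ k ∈ range (N + 1), ∑ l ∈ range (k + 1), f (k - l) l := by
  have h1 : ∀ m ∈ range (N + 1), ∑ l ∈ range (N + 1), f m l = ∑ l ∈ range (N + 1 - m), f m l := by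
    intro m hm
    symm
    apply sum_subset (by rw [range_subset_range]; omega)
    intro l hl hl2
    apply hf
    simp only [mem_range] at hm hl hl2 ⊢
    omega
  rw [sum_congr rfl h1, sum_sigma', sum_sigma']
  apply sum_nbij' (i := fun p => (⟨p.1 + p.2, p.2⟩ : (_ : ℕ) × ℕ))
    (j := fun p => (⟨p.1 - p.2, p.2⟩ : (_ : ℕ) × ℕ))
  · intro a ha
    simp only [mem_sigma, mem_range] at ha ⊢
    omega
  · intro a ha
    simp only [mem_sigma, mem_range] at ha ⊢
    omega
  · intro a ha
    simp only [mem_sigma, mem_range] at ha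
    simp only [Nat.add_sub_cancel]
  · intro a ha
    simp only [mem_sigma, mem_range] at ha
    have : a.1 - a.2 + a.2 = a.1 := by omega
    simp only [this]
  · intro a ha
    simp only [Nat.add_sub_cancel]

lemma hockey (y : ℝ) (k : ℕ) :
    ∑ l ∈ range (k + 1), (ascPochhammer ℝ l).eval y / l.factorial
      = (ascPochhammer ℝ k).eval (y + 1) / k.factorial := by
  induction k with
  | zero => simp
  | succ k ih =>
    rw [sum_range_succ, ih]
    have h1 : (ascPochhammer ℝ (k + 1)).eval y = y * (ascPochhammer ℝ k).eval (y + 1) := by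
      rw [ascPochhammer_succ_left]
      simp [Polynomial.eval_comp]
    have h2 : (ascPochhammer ℝ (k + 1)).eval (y + 1)
        = (ascPochhammer ℝ k).eval (y + 1) * (y + 1 + k) := ascPochhammer_succ_eval k (y + 1)
    rw [h1, h2, Nat.factorial_succ]
    have hk : (k.factorial : ℝ) ≠ 0 := Nat.cast_ne_zero.mpr k.factorial_ne_zero
    have hk1 : ((k + 1 : ℕ) : ℝ) ≠ 0 := by positivity
    push_cast
    field_simp
    ring

lemma orth (k k' : ℕ) :
    ∑ j ∈ range (k + 1), (-1 : ℝ) ^ j * (k.choose j : ℝ) * (j.descFactorial k' : ℝ)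
      = if k' = k then (-1 : ℝ) ^ k * (k.factorial : ℝ) else 0 := by
  rcases lt_trichotomy k' k with h | h | h
  · rw [if_neg (by omega)]
    have hd : ∀ j : ℕ, (j.descFactorial k' : ℝ) = (k'.factorial : ℝ) * (j.choose k' : ℝ) := by
      intro j
      exact_mod_cast congrArg (fun z : ℕ => (z : ℝ)) (Nat.descFactorial_eq_factorial_mul_choose j k')
    have h1 : ∀ j ∈ range (k + 1), (-1 : ℝ) ^ j * (k.choose j : ℝ) * (j.descFactorial k' : ℝ)
        = (k'.factorial : ℝ) * ((-1 : ℝ) ^ j * ((k.choose j : ℝ) * (j.choose k' : ℝ))) := by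
      intro j _; rw [hd]; ring
    rw [sum_congr rfl h1, ← mul_sum]
    have h2 : ∑ j ∈ range (k + 1), (-1 : ℝ) ^ j * ((k.choose j : ℝ) * (j.choose k' : ℝ)) = 0 := by
      rw [show k + 1 = k' + (k - k' + 1) from by omega, sum_range_add]
      have hz : ∀ j ∈ range k', (-1 : ℝ) ^ j * ((k.choose j : ℝ) * (j.choose k' : ℝ)) = 0 := by
        intro j hj
        rw [Nat.choose_eq_zero_of_lt (mem_range.mp hj)]
        simp
      rw [sum_congr rfl hz, sum_const_zero, zero_add]
      have hc : ∀ j ∈ range (k - k' + 1),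
          (-1 : ℝ) ^ (k' + j) * ((k.choose (k' + j) : ℝ) * ((k' + j).choose k' : ℝ))
          = ((-1 : ℝ) ^ k' * (k.choose k' : ℝ)) * ((-1 : ℝ) ^ j * ((k - k').choose j : ℝ)) := by
        intro j hj
        have hj' : k' + j ≤ k := by have := mem_range.mp hj; omega
        have := Nat.choose_mul (n := k) (k := k' + j) (s := k') (Nat.le_add_right _ _)
        have hcast : (k.choose (k' + j) : ℝ) * ((k' + j).choose k' : ℝ)
            = (k.choose k' : ℝ) * ((k - k').choose (k' + j - k') : ℝ) := by
          exact_mod_cast congrArg (fun z : ℕ => (z : ℝ)) this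
        rw [show k' + j - k' = j from by omega] at hcast
        rw [hcast, pow_add]
        ring
      rw [sum_congr rfl hc, ← mul_sum, altsum, if_neg (by omega), mul_zero]
    rw [h2, mul_zero]
  · subst h
    rw [if_pos rfl]
    rw [Finset.sum_eq_single_of_mem k' (self_mem_range_succ k')]
    · rw [Nat.descFactorial_self]
      simp
    · intro j hj hne
      have : j < k' := by have := mem_range.mp hj; omega
      rw [Nat.descFactorial_eq_zero_iff_lt.mpr this]
      simp
  · rw [if_neg (by omega)]
    apply sum_eq_zero
    intro j hj
    have : j < k' := by have := mem_range.mp hj; omega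
    rw [Nat.descFactorial_eq_zero_iff_lt.mpr this]
    simp

lemma eulerPolyH_eq (s : ℕ) : ∀ (n : ℕ) (x : ℝ), eulerPolyH s n x
    = ∑ k ∈ range (n + 1),
        (ascPochhammer ℝ k).eval (s : ℝ) / (k.factorial * 2 ^ k) * DD k n x := by
  induction s with
  | zero =>
    intro n x
    rw [show eulerPolyH 0 n x = x ^ n from rfl, Nat.cast_zero]
    symm
    rw [Finset.sum_eq_single_of_mem 0 (mem_range.mpr (by omega))]
    · simp [DD_def]
    · intro k _ hk
      rw [ascPochhammer_eval_zero, if_neg hk]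
      simp
  | succ s ih =>
    intro n x
    calc eulerPolyH (s + 1) n x
        = ∑ c ∈ range (n + 1), (n.choose c : ℝ) * eulerPoly c 0 * eulerPolyH s (n - c) x := rfl
      _ = ∑ c ∈ range (n + 1), ∑ p ∈ range (n + 1) ×ˢ range (n + 1),
            (n.choose c : ℝ) * ((2⁻¹ : ℝ) ^ p.1 * DD p.1 c 0)
              * ((ascPochhammer ℝ p.2).eval (s : ℝ) / (p.2.factorial * 2 ^ p.2) * DD p.2 (n - c) x) := by
          apply sum_congr rfl; intro c hc
          have hc' : c ≤ n := by have := mem_range.mp hc; omega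
          rw [eulerPoly_eq, ih (n - c) x]
          rw [show ∑ m ∈ range (c + 1), (2⁻¹ : ℝ) ^ m * DD m c 0
              = ∑ m ∈ range (n + 1), (2⁻¹ : ℝ) ^ m * DD m c 0 from
            sum_subset (by rw [range_subset_range]; omega)
              (fun m _ hm => by
                rw [DD_eq_zero c m 0 (by simp only [mem_range] at *; omega)]; ring)]
          rw [show ∑ l ∈ range (n - c + 1),
                (ascPochhammer ℝ l).eval (s : ℝ) / (l.factorial * 2 ^ l) * DD l (n - c) x
              = ∑ l ∈ range (n + 1),
                (ascPochhammer ℝ l).eval (s : ℝ) / (l.factorial * 2 ^ l) * DD l (n - c) x from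
            sum_subset (by rw [range_subset_range]; omega)
              (fun l _ hl => by
                rw [DD_eq_zero (n - c) l x (by simp only [mem_range] at *; omega)]; ring)]
          rw [mul_assoc, sum_mul_sum, ← sum_product', mul_sum]
          apply sum_congr rfl; intro p _
          ring
      _ = ∑ p ∈ range (n + 1) ×ˢ range (n + 1), ∑ c ∈ range (n + 1),
            (n.choose c : ℝ) * ((2⁻¹ : ℝ) ^ p.1 * DD p.1 c 0)
              * ((ascPochhammer ℝ p.2).eval (s : ℝ) / (p.2.factorial * 2 ^ p.2) * DD p.2 (n - c) x) :=
          sum_comm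
      _ = ∑ p ∈ range (n + 1) ×ˢ range (n + 1),
            (2⁻¹ : ℝ) ^ p.1 * ((ascPochhammer ℝ p.2).eval (s : ℝ) / (p.2.factorial * 2 ^ p.2))
              * DD (p.1 + p.2) n x := by
          apply sum_congr rfl; intro p _
          rw [← key_conv p.1 p.2 n x, mul_sum]
          apply sum_congr rfl; intro c _
          ring
      _ = ∑ m ∈ range (n + 1), ∑ l ∈ range (n + 1),
            (2⁻¹ : ℝ) ^ m * ((ascPochhammer ℝ l).eval (s : ℝ) / (l.factorial * 2 ^ l))
              * DD (m + l) n x :=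
          sum_product' (range (n + 1)) (range (n + 1))
            (fun m l => (2⁻¹ : ℝ) ^ m
              * ((ascPochhammer ℝ l).eval (s : ℝ) / (l.factorial * 2 ^ l)) * DD (m + l) n x)
      _ = ∑ k ∈ range (n + 1), ∑ l ∈ range (k + 1),
            (2⁻¹ : ℝ) ^ (k - l) * ((ascPochhammer ℝ l).eval (s : ℝ) / (l.factorial * 2 ^ l))
              * DD (k - l + l) n x :=
          triangle n _ (fun m l h => by
            simp only [DD_eq_zero n (m + l) x h, mul_zero])
      _ = ∑ k ∈ range (n + 1),
            (ascPochhammer ℝ k).eval ((s : ℝ) + 1) / (k.factorial * 2 ^ k) * DD k n x := by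
          apply sum_congr rfl; intro k hk
          have h1 : ∀ l ∈ range (k + 1),
              (2⁻¹ : ℝ) ^ (k - l) * ((ascPochhammer ℝ l).eval (s : ℝ) / (l.factorial * 2 ^ l))
                * DD (k - l + l) n x
              = ((ascPochhammer ℝ l).eval (s : ℝ) / l.factorial) * ((2⁻¹ : ℝ) ^ k * DD k n x) := by
            intro l hl
            have hlk : l ≤ k := by have := mem_range.mp hl; omega
            rw [Nat.sub_add_cancel hlk]
            have h2 : (2⁻¹ : ℝ) ^ (k - l) * (2⁻¹ : ℝ) ^ l = (2⁻¹ : ℝ) ^ k := by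
              rw [← pow_add, Nat.sub_add_cancel hlk]
            have hl2 : ((2 : ℝ)) ^ l ≠ 0 := by positivity
            have hlf : ((l.factorial : ℝ)) ≠ 0 := Nat.cast_ne_zero.mpr l.factorial_ne_zero
            rw [← h2, div_mul_eq_div_div,
              div_eq_mul_inv ((ascPochhammer ℝ l).eval (s : ℝ) / (l.factorial : ℝ)), ← inv_pow]
            ring
          rw [sum_congr rfl h1, ← sum_mul, hockey (s : ℝ) k]
          have h2k : ((2 : ℝ)) ^ k ≠ 0 := by positivity
          have hkf : ((k.factorial : ℝ)) ≠ 0 := Nat.cast_ne_zero.mpr k.factorial_ne_zero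
          rw [div_mul_eq_div_div,
            div_eq_mul_inv ((ascPochhammer ℝ k).eval ((s : ℝ) + 1) / (k.factorial : ℝ)), ← inv_pow]
          ring
      _ = ∑ k ∈ range (n + 1),
            (ascPochhammer ℝ k).eval (((s + 1 : ℕ)) : ℝ) / (k.factorial * 2 ^ k) * DD k n x := by
          apply sum_congr rfl; intro k _
          push_cast
          ring

theorem eulerPolyH_eq_sum_whitney (n : ℕ) (β : ℝ) (hβ : β ≠ 0) (r : ℝ) (s : ℕ)
    (W : ℕ → ℕ → ℝ)
    (hW : ∀ N M : ℕ, (β * (M : ℝ) + r) ^ N =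
      ∑ k ∈ Finset.range (N + 1), W N k * β ^ k * (M.descFactorial k : ℝ)) :
    eulerPolyH s n (r / β) =
      ∑ k ∈ Finset.range (n + 1),
        W n k * (-1) ^ k * (ascPochhammer ℝ k).eval (s : ℝ) / (β ^ (n - k) * 2 ^ k) := by
  rw [eulerPolyH_eq s n (r / β)]
  apply sum_congr rfl
  intro k hk
  have hkn : k ≤ n := by have := mem_range.mp hk; omega
  have hD : DD k n (r / β) = W n k * β ^ k * ((-1 : ℝ) ^ k * (k.factorial : ℝ)) / β ^ n := by
    rw [DD_def]
    have h1 : ∀ j ∈ range (k + 1), (-1 : ℝ) ^ j * (k.choose j : ℝ) * (r / β + j) ^ n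
        = (∑ k' ∈ range (n + 1), W n k' * β ^ k' * (j.descFactorial k' : ℝ))
            * ((-1 : ℝ) ^ j * (k.choose j : ℝ) / β ^ n) := by
      intro j _
      have harg : r / β + (j : ℝ) = (β * j + r) / β := by field_simp; ring
      rw [harg, div_pow, hW n j]
      ring
    rw [sum_congr rfl h1]
    simp only [sum_mul]
    rw [sum_comm]
    have h3 : ∀ k' ∈ range (n + 1),
        ∑ j ∈ range (k + 1), W n k' * β ^ k' * (j.descFactorial k' : ℝ)
            * ((-1 : ℝ) ^ j * (k.choose j : ℝ) / β ^ n)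
        = (W n k' * β ^ k' / β ^ n)
            * (if k' = k then (-1 : ℝ) ^ k * (k.factorial : ℝ) else 0) := by
      intro k' _
      rw [← orth k k', mul_sum]
      apply sum_congr rfl; intro j _; ring
    rw [sum_congr rfl h3]
    rw [Finset.sum_eq_single_of_mem k (mem_range.mpr (by omega))]
    · rw [if_pos rfl]; ring
    · intro b _ hb; rw [if_neg hb, mul_zero]
  rw [hD]
  have hβn : β ^ (n - k) * β ^ k = β ^ n := pow_sub_mul_pow β hkn
  have hkf : ((k.factorial : ℝ)) ≠ 0 := Nat.cast_ne_zero.mpr k.factorial_ne_zero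
  have h2k : ((2 : ℝ)) ^ k ≠ 0 := by positivity
  have hβk : β ^ k ≠ 0 := pow_ne_zero _ hβ
  have hβnk : β ^ (n - k) ≠ 0 := pow_ne_zero _ hβ
  rw [← hβn]
  field_simp
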